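/- Define on ℝ⁴ with canonical coordinates (u, q, p_u, p_q) the Hamiltonian H̄ = (1/2)p_u² + (4/u²)((1/2)p_q² + (c₁ + c₂cos q)/sin²q) + ωu² and the function K̄ = p_q p_u² sin q + (4/u)p_u p_q² cos q - (4/u²)p_q³ sin q + (4/u)p_u (c₂(cos²q + 1) + 2c₁ cos q)/sin²q + (2/u²)p_q (ωu⁴ sin²q - 4(c₁ + c₂ cos q))/sin q. Then the canonical Poisson bracket {H̄, K̄} vanishes identically on the domain u ≠ 0, sin q ≠ 0. -/

import Mathlib

/-- The TTW Hamiltonian for λ = 1 in coordinates (u, q, p_u, p_q). -/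
noncomputable def Hbar (c₁ c₂ ω u q pu pq : ℝ) : ℝ :=
  (1/2) * pu^2
    + (4 / u^2) * ((1/2) * pq^2 + (c₁ + c₂ * Real.cos q) / (Real.sin q)^2)
    + ω * u^2

/-- The explicit first integral of the TTW system for λ = 1. -/
noncomputable def Kbar (c₁ c₂ ω u q pu pq : ℝ) : ℝ :=
  pq * pu^2 * Real.sin q
    + (4 / u) * pu * pq^2 * Real.cos q
    - (4 / u^2) * pq^3 * Real.sin q
    + (4 / u) * pu * (c₂ * ((Real.cos q)^2 + 1) + 2 * c₁ * Real.cos q) / (Real.sin q)^2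
    + (2 / u^2) * pq * (ω * u^4 * (Real.sin q)^2 - 4 * (c₁ + c₂ * Real.cos q)) / Real.sin q

private lemma hda_congr {f : ℝ → ℝ} {a b x : ℝ} (h : HasDerivAt f a x) (hab : a = b) :
    HasDerivAt f b x := hab ▸ h

lemma dH_q (c₁ c₂ ω u q pu pq : ℝ) (hu : u ≠ 0) (hs : Real.sin q ≠ 0) :
    HasDerivAt (fun q' => Hbar c₁ c₂ ω u q' pu pq)
      (4/u^2 * ((-(c₂ * Real.sin q^2) - 2*Real.cos q*(c₁ + c₂*Real.cos q)) / Real.sin q^3)) q := by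
  have hs2 : (Real.sin q)^2 ≠ 0 := pow_ne_zero _ hs
  have h1 : HasDerivAt (fun q' : ℝ => c₁ + c₂ * Real.cos q') (c₂ * -Real.sin q) q :=
    ((Real.hasDerivAt_cos q).const_mul c₂).const_add c₁
  have h2 := (Real.hasDerivAt_sin q).pow 2
  have h5 := (((h1.div h2 hs2).const_add ((1/2)*pq^2)).const_mul (4/u^2)).const_add ((1/2)*pu^2)
  exact hda_congr (h5.add_const (ω*u^2)) (by simp only [Pi.pow_apply]; field_simp [hu, hs]; ring)

lemma dH_pq (c₁ c₂ ω u q pu pq : ℝ) :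
    HasDerivAt (fun pq' => Hbar c₁ c₂ ω u q pu pq') (4*pq/u^2) pq := by
  have h := ((((hasDerivAt_pow 2 pq).const_mul ((1:ℝ)/2)).add_const
      ((c₁ + c₂ * Real.cos q) / (Real.sin q)^2)).const_mul (4/u^2)).const_add ((1/2)*pu^2)
  exact hda_congr (h.add_const (ω*u^2)) (by push_cast; ring)

lemma dH_pu (c₁ c₂ ω u q pu pq : ℝ) :
    HasDerivAt (fun pu' => Hbar c₁ c₂ ω u q pu' pq) pu pu := by
  have h := ((hasDerivAt_pow 2 pu).const_mul ((1:ℝ)/2)).add_const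
      ((4/u^2) * ((1/2)*pq^2 + (c₁ + c₂ * Real.cos q) / (Real.sin q)^2))
  exact hda_congr (h.add_const (ω*u^2)) (by push_cast; ring)

lemma dH_u (c₁ c₂ ω u q pu pq : ℝ) (hu : u ≠ 0) (hs : Real.sin q ≠ 0) :
    HasDerivAt (fun u' => Hbar c₁ c₂ ω u' q pu pq)
      (-4*pq^2/u^3 - 8*(c₁ + c₂*Real.cos q)/(u^3 * Real.sin q^2) + 2*ω*u) u := by
  have hu2 : u^2 ≠ 0 := pow_ne_zero _ hu
  have hinv := (hasDerivAt_const u (4:ℝ)).div (hasDerivAt_pow 2 u) hu2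
  have h := ((hinv.mul_const ((1/2)*pq^2 + (c₁ + c₂ * Real.cos q) / (Real.sin q)^2)).const_add
      ((1/2)*pu^2)).add ((hasDerivAt_pow 2 u).const_mul ω)
  exact hda_congr h (by field_simp; ring)

lemma dK_q (c₁ c₂ ω u q pu pq : ℝ) (hu : u ≠ 0) (hs : Real.sin q ≠ 0) :
    HasDerivAt (fun q' => Kbar c₁ c₂ ω u q' pu pq)
      (pq*pu^2*Real.cos q - 4/u*pu*pq^2*Real.sin q - 4/u^2*pq^3*Real.cos q
        + 4*pu/u * (((-(2*c₂*Real.cos q) - 2*c₁)*Real.sin q^2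
            - 2*Real.cos q*(c₂*(Real.cos q^2+1)+2*c₁*Real.cos q))/Real.sin q^3)
        + 2*pq/u^2 * ((ω*u^4*Real.sin q^2*Real.cos q + 4*c₂*Real.sin q^2
            + 4*c₁*Real.cos q + 4*c₂*Real.cos q^2)/Real.sin q^2)) q := by
  have hs2 : (Real.sin q)^2 ≠ 0 := pow_ne_zero _ hs
  have hsin := Real.hasDerivAt_sin q
  have hcos := Real.hasDerivAt_cos q
  have t1 := hsin.const_mul (pq*pu^2)
  have t2 := hcos.const_mul ((4/u)*pu*pq^2)
  have t3 := hsin.const_mul ((4/u^2)*pq^3)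
  have hN := (((hcos.pow 2).add_const 1).const_mul c₂).add (hcos.const_mul (2*c₁))
  have t4 := (hN.const_mul ((4/u)*pu)).div (hsin.pow 2) hs2
  have hN2 := (((hsin.pow 2).const_mul (ω*u^4)).sub
      (((hcos.const_mul c₂).const_add c₁).const_mul 4))
  have t5 := (hN2.const_mul ((2/u^2)*pq)).div hsin hs
  exact hda_congr ((((t1.add t2).sub t3).add t4).add t5) (by simp only [Pi.pow_apply, Pi.add_apply, Pi.sub_apply]; field_simp [hu, hs]; ring)

lemma dK_pq (c₁ c₂ ω u q pu pq : ℝ) (hs : Real.sin q ≠ 0) :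
    HasDerivAt (fun pq' => Kbar c₁ c₂ ω u q pu pq')
      (pu^2*Real.sin q + 8/u*pu*pq*Real.cos q - 12/u^2*pq^2*Real.sin q
        + 2/u^2*(ω*u^4*Real.sin q^2 - 4*(c₁ + c₂*Real.cos q))/Real.sin q) pq := by
  have t1 := ((hasDerivAt_id pq).mul_const (pu^2)).mul_const (Real.sin q)
  have t2 := ((hasDerivAt_pow 2 pq).const_mul ((4/u)*pu)).mul_const (Real.cos q)
  have t3 := ((hasDerivAt_pow 3 pq).const_mul (4/u^2)).mul_const (Real.sin q)
  have t5 := (((hasDerivAt_id pq).const_mul (2/u^2)).mul_const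
      (ω*u^4*(Real.sin q)^2 - 4*(c₁ + c₂*Real.cos q))).div_const (Real.sin q)
  have h := ((((t1.add t2).sub t3).add_const
      ((4/u)*pu*(c₂*((Real.cos q)^2+1)+2*c₁*Real.cos q)/(Real.sin q)^2)).add t5)
  exact hda_congr h (by push_cast; ring)

lemma dK_pu (c₁ c₂ ω u q pu pq : ℝ) :
    HasDerivAt (fun pu' => Kbar c₁ c₂ ω u q pu' pq)
      (2*pq*pu*Real.sin q + 4/u*pq^2*Real.cos q
        + 4/u*(c₂*(Real.cos q^2+1)+2*c₁*Real.cos q)/Real.sin q^2) pu := by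
  have t1 := ((hasDerivAt_pow 2 pu).const_mul pq).mul_const (Real.sin q)
  have t2 := (((hasDerivAt_id pu).const_mul (4/u)).mul_const (pq^2)).mul_const (Real.cos q)
  have t4 := ((((hasDerivAt_id pu).const_mul (4/u)).mul_const
      (c₂*((Real.cos q)^2+1)+2*c₁*Real.cos q)).div_const ((Real.sin q)^2))
  have h := ((((t1.add t2).sub_const ((4/u^2)*pq^3*Real.sin q)).add t4).add_const
      ((2/u^2)*pq*(ω*u^4*(Real.sin q)^2 - 4*(c₁ + c₂*Real.cos q))/Real.sin q))
  exact hda_congr h (by push_cast; ring)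

lemma dK_u (c₁ c₂ ω u q pu pq : ℝ) (hu : u ≠ 0) (hs : Real.sin q ≠ 0) :
    HasDerivAt (fun u' => Kbar c₁ c₂ ω u' q pu pq)
      (-(4/u^2)*pu*pq^2*Real.cos q + 8/u^3*pq^3*Real.sin q
        - 4/u^2*pu*(c₂*(Real.cos q^2+1)+2*c₁*Real.cos q)/Real.sin q^2
        + pq*(4*ω*u*Real.sin q^2 + 16*(c₁ + c₂*Real.cos q)/u^3)/Real.sin q) u := by
  have hu2 : u^2 ≠ 0 := pow_ne_zero _ hu
  have hinv1 := (hasDerivAt_const u (4:ℝ)).div (hasDerivAt_id u) hu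
  have hinv2 := (hasDerivAt_const u (4:ℝ)).div (hasDerivAt_pow 2 u) hu2
  have t2 := ((hinv1.mul_const pu).mul_const (pq^2)).mul_const (Real.cos q)
  have t3 := (hinv2.mul_const (pq^3)).mul_const (Real.sin q)
  have t4 := ((hinv1.mul_const pu).mul_const
      (c₂*((Real.cos q)^2+1)+2*c₁*Real.cos q)).div_const ((Real.sin q)^2)
  have g1 := ((hasDerivAt_const u (2:ℝ)).div (hasDerivAt_pow 2 u) hu2).mul_const pq
  have g2 := (((hasDerivAt_pow 4 u).const_mul ω).mul_const ((Real.sin q)^2)).sub_const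
      (4*(c₁ + c₂*Real.cos q))
  have t5 := (g1.mul g2).div_const (Real.sin q)
  have h := ((((t2.const_add (pq*pu^2*Real.sin q)).sub t3).add t4).add t5)
  exact hda_congr h (by simp only [id, Pi.div_apply, Pi.pow_apply]; field_simp; ring)

theorem ttw_first_integral_poisson_commutes (c₁ c₂ ω : ℝ) :
    ∀ u q pu pq : ℝ, u ≠ 0 → Real.sin q ≠ 0 →
      deriv (fun q' => Hbar c₁ c₂ ω u q' pu pq) q
          * deriv (fun pq' => Kbar c₁ c₂ ω u q pu pq') pq
        - deriv (fun pq' => Hbar c₁ c₂ ω u q pu pq') pq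
          * deriv (fun q' => Kbar c₁ c₂ ω u q' pu pq) q
        + deriv (fun u' => Hbar c₁ c₂ ω u' q pu pq) u
          * deriv (fun pu' => Kbar c₁ c₂ ω u q pu' pq) pu
        - deriv (fun pu' => Hbar c₁ c₂ ω u q pu' pq) pu
          * deriv (fun u' => Kbar c₁ c₂ ω u' q pu pq) u
        = 0 := by
  intro u q pu pq hu hs
  rw [(dH_q c₁ c₂ ω u q pu pq hu hs).deriv, (dH_pq c₁ c₂ ω u q pu pq).deriv,
    (dH_pu c₁ c₂ ω u q pu pq).deriv, (dH_u c₁ c₂ ω u q pu pq hu hs).deriv,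
    (dK_q c₁ c₂ ω u q pu pq hu hs).deriv, (dK_pq c₁ c₂ ω u q pu pq hs).deriv,
    (dK_pu c₁ c₂ ω u q pu pq).deriv, (dK_u c₁ c₂ ω u q pu pq hu hs).deriv]
  have hsc : Real.sin q ^ 2 + Real.cos q ^ 2 = 1 := Real.sin_sq_add_cos_sq q
  field_simp
  linear_combination ((-32) * c₂ * Real.sin q * Real.cos q * u * pu * pq + (-4) * c₂ * Real.sin q ^ 2 * u ^ 2 * pu ^ 2 + (-8) * c₂ * Real.sin q ^ 2 * u ^ 4 * ω + (16) * c₂ * Real.sin q ^ 2 * pq ^ 2 + (32) * c₂ * c₁ + (32) * c₂ ^ 2 * Real.cos q) * hsc
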